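/- arXiv:2305.14974 — 3 statements merged into one kernel-verified Lean document; each statement's English description precedes it below -/
import Mathlib

section
/- Let N ≥ 1 and let Z₁, …, Z_N be nonempty finite types. Let π be a probability mass function on Z₁ with π z > 0 for all z; for k = 1, …, N−1 let P_k : Z_k → Z_{k+1} → ℝ be a transition kernel with P_k z a probability mass function on Z_{k+1} and P_k z z' > 0 for all z, z'; and let ω : Z_N → ℝ satisfy 0 < ω z ≤ 1 for all z. Define forward marginals α₁ = π and α_{k+1}(z') = ∑_z α_k(z) · P_k z z', and backward likelihoods b_N = ω and b_k(z) = ∑_{z'} P_k z z' · b_{k+1}(z'), and the likelihood L = ∑_z α_N(z) · ω(z). Then for any probability mass functions q₁, …, q_N with q_k on Z_k: −log L ≤ (1/N) · ∑_{k=1}^N [ ∑_z q_k(z) · log (q_k(z)/α_k(z)) − ∑_z q_k(z) · log (b_k(z)) ], with the convention 0 · log 0 = 0. -/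
lemma gibbs_aux {ι : Type*} [Fintype ι] (p q : ι → ℝ)
    (hp : ∀ i, 0 < p i) (hq : ∀ i, 0 ≤ q i)
    (hps : ∑ i, p i = 1) (hqs : ∑ i, q i = 1) :
    0 ≤ ∑ i, q i * Real.log (q i / p i) := by
  have h : ∀ i, q i - p i ≤ q i * Real.log (q i / p i) := by
    intro i
    rcases eq_or_lt_of_le (hq i) with h0 | h0
    · simp [← h0]
      linarith [(hp i).le]
    · have hlog : Real.log (p i / q i) ≤ p i / q i - 1 :=
        Real.log_le_sub_one_of_pos (div_pos (hp i) h0)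
      have hinv : Real.log (q i / p i) = - Real.log (p i / q i) := by
        rw [← Real.log_inv]
        congr 1
        field_simp
      rw [hinv]
      have hq' : q i * (p i / q i) = p i := by field_simp
      nlinarith [h0, hp i]
  calc (0:ℝ) = ∑ i, (q i - p i) := by rw [Finset.sum_sub_distrib, hps, hqs]; ring
    _ ≤ _ := Finset.sum_le_sum fun i _ => h i

/-- Base variational bound `F ≥ L` (Eq. (7)/(S4) of the paper) for a
finite-state Markov chain `x → z₁ → ⋯ → z_N → y`: with forward messages
`α k = p(z_k|x)` (defined by `α 1 = π` and the forward recursion through the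
transition kernels `P k`), backward likelihoods `b k = p(y|z_k)` (defined by
`b N = ω` and the backward recursion), and likelihood `L = p(y|x)`, for any
variational pmfs `q k`:
`-log L ≤ (1/N) ∑ₖ [ KL(q_k‖α_k) - E_{q_k}[log b_k] ]`. -/
theorem variational_bound (N : ℕ) (hN : 1 ≤ N)
    (Z : ℕ → Type*) [∀ k, Fintype (Z k)] [∀ k, Nonempty (Z k)]
    (π : Z 1 → ℝ) (hπ_sum : ∑ z, π z = 1) (hπ_pos : ∀ z, 0 < π z)
    (P : ∀ k : ℕ, Z k → Z (k + 1) → ℝ)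
    (hP_sum : ∀ k, 1 ≤ k → k < N → ∀ z : Z k, ∑ z', P k z z' = 1)
    (hP_pos : ∀ k, 1 ≤ k → k < N → ∀ (z : Z k) (z' : Z (k + 1)), 0 < P k z z')
    (ω : Z N → ℝ) (hω_pos : ∀ z, 0 < ω z) (hω_le : ∀ z, ω z ≤ 1)
    (α : ∀ k : ℕ, Z k → ℝ)
    (hα1 : ∀ z, α 1 z = π z)
    (hα : ∀ k, 1 ≤ k → k < N → ∀ z' : Z (k + 1), α (k + 1) z' = ∑ z, α k z * P k z z')
    (b : ∀ k : ℕ, Z k → ℝ)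
    (hbN : ∀ z, b N z = ω z)
    (hb : ∀ k, 1 ≤ k → k < N → ∀ z : Z k, b k z = ∑ z', P k z z' * b (k + 1) z')
    (L : ℝ) (hL : L = ∑ z, α N z * ω z)
    (q : ∀ k : ℕ, Z k → ℝ)
    (hq_sum : ∀ k, 1 ≤ k → k ≤ N → ∑ z, q k z = 1)
    (hq_nonneg : ∀ k z, 0 ≤ q k z) :
    -Real.log L ≤ (1 / (N : ℝ)) * ∑ k ∈ Finset.Icc 1 N,
      (∑ z, q k z * Real.log (q k z / α k z) - ∑ z, q k z * Real.log (b k z)) := by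
  -- positivity of α
  have hαpos : ∀ k, 1 ≤ k → k ≤ N → ∀ z : Z k, 0 < α k z := by
    intro k hk
    induction k, hk using Nat.le_induction with
    | base => intro _ z; rw [hα1]; exact hπ_pos z
    | succ k hk ih =>
      intro hkN z
      have hkN' : k < N := by omega
      rw [hα k hk hkN' z]
      exact Finset.sum_pos (fun z' _ => mul_pos (ih (by omega) z') (hP_pos k hk hkN' z' z))
        Finset.univ_nonempty
  -- positivity of b (downward induction)
  have hbpos : ∀ d k, 1 ≤ k → k + d = N → ∀ z : Z k, 0 < b k z := by
    intro d
    induction d with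
    | zero =>
      intro k hk hkN z
      simp only [Nat.add_zero] at hkN
      subst hkN
      rw [hbN]; exact hω_pos z
    | succ d ih =>
      intro k hk hkN z
      have hkN' : k < N := by omega
      rw [hb k hk hkN' z]
      exact Finset.sum_pos (fun z' _ => mul_pos (hP_pos k hk hkN' z z')
        (ih (k+1) (by omega) (by omega) z')) Finset.univ_nonempty
  -- invariant ∑ α_k b_k = L
  have hinv : ∀ d k, 1 ≤ k → k + d = N → ∑ z, α k z * b k z = L := by
    intro d
    induction d with
    | zero =>
      intro k hk hkN
      simp only [Nat.add_zero] at hkN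
      subst hkN
      rw [hL]
      exact Finset.sum_congr rfl fun z _ => by rw [hbN]
    | succ d ih =>
      intro k hk hkN
      have hkN' : k < N := by omega
      calc ∑ z, α k z * b k z
          = ∑ z, ∑ z', α k z * (P k z z' * b (k+1) z') := by
            refine Finset.sum_congr rfl fun z _ => ?_
            rw [hb k hk hkN' z, Finset.mul_sum]
        _ = ∑ z', α (k+1) z' * b (k+1) z' := by
            rw [Finset.sum_comm]
            refine Finset.sum_congr rfl fun z' _ => ?_
            rw [hα k hk hkN' z', Finset.sum_mul]
            refine Finset.sum_congr rfl fun z _ => by ring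
        _ = L := ih (k+1) (by omega) (by omega)
  have hLpos : 0 < L := by
    rw [hL]
    exact Finset.sum_pos (fun z _ => mul_pos (hαpos N hN le_rfl z) (hω_pos z))
      Finset.univ_nonempty
  -- per-k bound
  have key : ∀ k, 1 ≤ k → k ≤ N →
      -Real.log L ≤ ∑ z, q k z * Real.log (q k z / α k z)
        - ∑ z, q k z * Real.log (b k z) := by
    intro k hk hkN
    have hbk : ∀ z : Z k, 0 < b k z := hbpos (N - k) k hk (by omega)
    have hαk : ∀ z : Z k, 0 < α k z := hαpos k hk hkN
    set p : Z k → ℝ := fun z => α k z * b k z / L with hp_def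
    have hpp : ∀ z, 0 < p z := fun z => div_pos (mul_pos (hαk z) (hbk z)) hLpos
    have hps : ∑ z, p z = 1 := by
      rw [hp_def]
      simp only
      rw [← Finset.sum_div, hinv (N - k) k hk (by omega)]
      field_simp
    have hgibbs := gibbs_aux p (q k) hpp (hq_nonneg k) hps (hq_sum k hk hkN)
    have heq : ∑ z, q k z * Real.log (q k z / p z)
        = ∑ z, q k z * Real.log (q k z / α k z)
          - ∑ z, q k z * Real.log (b k z)
          + (∑ z, q k z) * Real.log L := by
      rw [Finset.sum_mul, ← Finset.sum_sub_distrib, ← Finset.sum_add_distrib]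
      refine Finset.sum_congr rfl fun z _ => ?_
      rcases eq_or_lt_of_le (hq_nonneg k z) with h0 | h0
      · simp [← h0]
      · have : Real.log (q k z / p z)
            = Real.log (q k z / α k z) - Real.log (b k z) + Real.log L := by
          rw [hp_def]
          simp only
          rw [Real.log_div (ne_of_gt h0) (ne_of_gt (hpp z)),
              Real.log_div (ne_of_gt h0) (ne_of_gt (hαk z)),
              Real.log_div (ne_of_gt (mul_pos (hαk z) (hbk z))) (ne_of_gt hLpos),
              Real.log_mul (ne_of_gt (hαk z)) (ne_of_gt (hbk z))]
          ring
        rw [this]; ring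
    rw [heq, hq_sum k hk hkN, one_mul] at hgibbs
    linarith
  -- combine
  have hNpos : (0:ℝ) < N := by exact_mod_cast hN
  have hsum : (N : ℝ) * (-Real.log L) ≤ ∑ k ∈ Finset.Icc 1 N,
      (∑ z, q k z * Real.log (q k z / α k z) - ∑ z, q k z * Real.log (b k z)) := by
    have hcard : (Finset.Icc 1 N).card = N := by rw [Nat.card_Icc]; omega
    calc (N : ℝ) * (-Real.log L)
        = ∑ _k ∈ Finset.Icc 1 N, (-Real.log L) := by
          rw [Finset.sum_const, hcard, nsmul_eq_mul]
      _ ≤ _ := Finset.sum_le_sum fun k hk => by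
          rw [Finset.mem_Icc] at hk
          exact key k hk.1 hk.2
  have h1 : -Real.log L = (1 / (N:ℝ)) * ((N:ℝ) * (-Real.log L)) := by
    field_simp
  rw [h1]
  exact mul_le_mul_of_nonneg_left hsum (by positivity)
end

section
/- Let Z and W be nonempty finite types. Let q be a probability mass function on Z; for each z ∈ Z let p_z be a probability mass function on W with p_z(w) > 0 for all w; and let b : W → ℝ satisfy 0 < b(w) ≤ 1 for all w. Define the mixed forward message p̄(w) = ∑_z q(z) · p_z(w). Then for every probability mass function q' on W (with the convention 0 · log 0 = 0): −∑_z q(z) · log ( ∑_w p_z(w) · b(w) ) ≤ ∑_w q'(w) · log ( q'(w) / p̄(w) ) − ∑_z ∑_w q(z) · q'(w) · log (p_z(w)) − ∑_w q'(w) · log (b(w)). -/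
/-- Variational lower bound: for nonnegative weights `a` summing to 1 and
positive `c`, `∑ a w * log (c w / a w) ≤ log (∑ c w)`. -/
lemma elbo_aux {W : Type*} [Fintype W] [Nonempty W]
    (a c : W → ℝ) (ha_sum : ∑ w, a w = 1) (ha : ∀ w, 0 ≤ a w)
    (hc : ∀ w, 0 < c w) :
    ∑ w, a w * Real.log (c w / a w) ≤ Real.log (∑ w, c w) := by
  set S := ∑ w, c w with hS
  have hSpos : 0 < S := Finset.sum_pos (fun w _ => hc w) Finset.univ_nonempty
  have key : ∀ w, a w * Real.log (c w / a w) ≤ c w / S - a w + a w * Real.log S := by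
    intro w
    rcases eq_or_lt_of_le (ha w) with h | h
    · rw [← h]; simp [div_nonneg (le_of_lt (hc w)) hSpos.le]
    · have h1 : Real.log (c w / a w) = Real.log (c w / (S * a w)) + Real.log S := by
        rw [← Real.log_mul (ne_of_gt (div_pos (hc w) (mul_pos hSpos h))) (ne_of_gt hSpos)]
        congr 1
        field_simp
      have h2 : Real.log (c w / (S * a w)) ≤ c w / (S * a w) - 1 :=
        Real.log_le_sub_one_of_pos (div_pos (hc w) (mul_pos hSpos h))
      have h3 : a w * Real.log (c w / (S * a w)) ≤ a w * (c w / (S * a w) - 1) :=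
        mul_le_mul_of_nonneg_left h2 h.le
      have h4 : a w * (c w / (S * a w) - 1) = c w / S - a w := by
        field_simp
      rw [h1]
      nlinarith [h3, h4]
  calc ∑ w, a w * Real.log (c w / a w)
      ≤ ∑ w, (c w / S - a w + a w * Real.log S) := Finset.sum_le_sum fun w _ => key w
    _ = (∑ w, c w) / S - (∑ w, a w) + (∑ w, a w) * Real.log S := by
        rw [Finset.sum_add_distrib, Finset.sum_sub_distrib, ← Finset.sum_div,
          ← Finset.sum_mul]
    _ = Real.log S := by
        rw [ha_sum, ← hS, div_self (ne_of_gt hSpos)]; ring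

/-- Single-step bootstrapping inequality (Eqs. (S8)–(S11) of the paper): with
variational marginal `q` on `Z`, forward transition kernels `p z` on `W`,
backward likelihood `b` with `0 < b w ≤ 1`, mixed forward message
`p̄ w = ∑_z q z * p z w`, and any pmf `q'` on `W`:
`-E_q[log ∑_w p_z(w) b(w)] ≤ KL(q'‖p̄) - E_{q,q'}[log p_z(w)] - E_{q'}[log b]`. -/
theorem bootstrapping_step_inequality {Z W : Type*}
    [Fintype Z] [Fintype W] [Nonempty Z] [Nonempty W]
    (q : Z → ℝ) (hq_sum : ∑ z, q z = 1) (hq_nonneg : ∀ z, 0 ≤ q z)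
    (p : Z → W → ℝ)
    (hp_sum : ∀ z, ∑ w, p z w = 1) (hp_pos : ∀ z w, 0 < p z w)
    (b : W → ℝ) (hb_pos : ∀ w, 0 < b w) (hb_le : ∀ w, b w ≤ 1)
    (pbar : W → ℝ) (hpbar : ∀ w, pbar w = ∑ z, q z * p z w)
    (q' : W → ℝ) (hq'_sum : ∑ w, q' w = 1) (hq'_nonneg : ∀ w, 0 ≤ q' w) :
    -∑ z, q z * Real.log (∑ w, p z w * b w) ≤
      ∑ w, q' w * Real.log (q' w / pbar w)
        - ∑ z, ∑ w, q z * q' w * Real.log (p z w)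
        - ∑ w, q' w * Real.log (b w) := by
  -- positivity and bounds for pbar
  have hpbar_pos : ∀ w, 0 < pbar w := by
    intro w
    rw [hpbar w]
    obtain ⟨z0, hz0⟩ : ∃ z, 0 < q z := by
      by_contra hcon
      push_neg at hcon
      have hle : ∑ z, q z ≤ 0 := Finset.sum_nonpos fun z _ => hcon z
      rw [hq_sum] at hle; linarith
    exact Finset.sum_pos' (fun z _ => mul_nonneg (hq_nonneg z) (hp_pos z w).le)
      ⟨z0, Finset.mem_univ z0, mul_pos hz0 (hp_pos z0 w)⟩
  have hp_le1 : ∀ z w, p z w ≤ 1 := by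
    intro z w
    calc p z w ≤ ∑ w', p z w' :=
          Finset.single_le_sum (fun w' _ => (hp_pos z w').le) (Finset.mem_univ w)
      _ = 1 := hp_sum z
  have hpbar_le1 : ∀ w, pbar w ≤ 1 := by
    intro w
    rw [hpbar w, ← hq_sum]
    exact Finset.sum_le_sum fun z _ => by
      nlinarith [hq_nonneg z, hp_le1 z w, hp_pos z w]
  -- step 1: ELBO per z
  have keyz : ∀ z, Real.log (∑ w, p z w * b w) ≥
      ∑ w, q' w * Real.log (p z w * b w / q' w) := by
    intro z
    exact elbo_aux q' (fun w => p z w * b w) hq'_sum hq'_nonneg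
      (fun w => mul_pos (hp_pos z w) (hb_pos w))
  have h1 : -∑ z, q z * Real.log (∑ w, p z w * b w) ≤
      -∑ z, q z * ∑ w, q' w * Real.log (p z w * b w / q' w) := by
    apply neg_le_neg
    exact Finset.sum_le_sum fun z _ =>
      mul_le_mul_of_nonneg_left (keyz z) (hq_nonneg z)
  -- expand the inner sum
  have expand : ∀ z, ∑ w, q' w * Real.log (p z w * b w / q' w) =
      ∑ w, (q' w * Real.log (p z w) + q' w * Real.log (b w)
        - q' w * Real.log (q' w)) := by
    intro z
    refine Finset.sum_congr rfl fun w _ => ?_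
    rcases eq_or_lt_of_le (hq'_nonneg w) with h | h
    · rw [← h]; ring
    · rw [Real.log_div (ne_of_gt (mul_pos (hp_pos z w) (hb_pos w))) (ne_of_gt h),
        Real.log_mul (ne_of_gt (hp_pos z w)) (ne_of_gt (hb_pos w))]
      ring
  have h2 : ∑ z, q z * ∑ w, q' w * Real.log (p z w * b w / q' w)
      = (∑ z, ∑ w, q z * q' w * Real.log (p z w))
        + (∑ w, q' w * Real.log (b w)) - (∑ w, q' w * Real.log (q' w)) := by
    calc ∑ z, q z * ∑ w, q' w * Real.log (p z w * b w / q' w)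
        = ∑ z, ((∑ w, q z * q' w * Real.log (p z w))
            + q z * (∑ w, q' w * Real.log (b w))
            - q z * (∑ w, q' w * Real.log (q' w))) := by
          refine Finset.sum_congr rfl fun z _ => ?_
          rw [expand z]
          simp only [Finset.mul_sum]
          rw [← Finset.sum_add_distrib, ← Finset.sum_sub_distrib]
          exact Finset.sum_congr rfl fun w _ => by ring
      _ = (∑ z, ∑ w, q z * q' w * Real.log (p z w))
          + (∑ z, q z) * (∑ w, q' w * Real.log (b w))
          - (∑ z, q z) * (∑ w, q' w * Real.log (q' w)) := by
          rw [Finset.sum_sub_distrib, Finset.sum_add_distrib, ← Finset.sum_mul,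
            ← Finset.sum_mul]
      _ = _ := by rw [hq_sum]; ring
  -- KL decomposition
  have hKL : ∑ w, q' w * Real.log (q' w / pbar w)
      = ∑ w, q' w * Real.log (q' w) - ∑ w, q' w * Real.log (pbar w) := by
    rw [← Finset.sum_sub_distrib]
    refine Finset.sum_congr rfl fun w _ => ?_
    rcases eq_or_lt_of_le (hq'_nonneg w) with h | h
    · rw [← h]; ring
    · rw [Real.log_div (ne_of_gt h) (ne_of_gt (hpbar_pos w))]; ring
  -- log pbar ≤ 0
  have hlogpbar : ∑ w, q' w * Real.log (pbar w) ≤ 0 := by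
    apply Finset.sum_nonpos
    intro w _
    exact mul_nonpos_of_nonneg_of_nonpos (hq'_nonneg w)
      (Real.log_nonpos (hpbar_pos w).le (hpbar_le1 w))
  rw [hKL]
  linarith
end

section
/- Let N ≥ 1 and let Z₁, …, Z_N be nonempty finite types. Let π be a probability mass function on Z₁ with π z > 0 for all z; for k = 1, …, N−1 let P_k : Z_k → Z_{k+1} → ℝ be a transition kernel with P_k z a probability mass function on Z_{k+1} and P_k z z' > 0 for all z, z'; and let ω : Z_N → ℝ satisfy 0 < ω z ≤ 1 for all z. Define forward marginals α₁ = π, α_{k+1}(z') = ∑_z α_k(z) · P_k z z', and the likelihood L = ∑_z α_N(z) · ω(z). Let q₁, …, q_N be arbitrary probability mass functions with q_k on Z_k, and for l = 2, …, N let Q_l : Z_{l-1} → Z_l → ℝ be arbitrary transition kernels with each Q_l z a probability mass function on Z_l. Define propagated variational marginals q_{k→k} = q_k and q_{k→l}(z') = ∑_z q_{k→(l-1)}(z) · Q_l z z' for k < l ≤ N. Define the local losses (with convention 0 · log 0 = 0): ℓ_k^{(α)} = ∑_z q_k(z) · log (q_k(z)/α_k(z)); for k < l ≤ N, ℓ_{k,l}^{(ρ)}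 = ∑_{z'} q_{k→l}(z') · log ( q_{k→l}(z') / ∑_z q_{k→(l-1)}(z) · P_{l-1} z z' ) − ∑_z ∑_{z'} q_{k→(l-1)}(z) · q_{k→l}(z') · log (P_{l-1} z z'); and ℓ_k^{(ω)} = −∑_z q_{k→N}(z) · log (ω(z)). Then the negative log-likelihood is bounded by the sum of local losses: −log L ≤ ∑_{k=1}^N [ ℓ_k^{(α)} + ℓ_k^{(ω)} + ∑_{l=k+1}^N ℓ_{k,l}^{(ρ)} ]. -/
lemma kl_ge_neg_log {ι : Type*} [Fintype ι] (p r : ι → ℝ)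
    (hp : ∀ i, 0 ≤ p i) (hr : ∀ i, 0 < r i) (hp1 : ∑ i, p i = 1) :
    -Real.log (∑ i, r i) ≤ ∑ i, p i * Real.log (p i / r i) := by
  have hne : (Finset.univ : Finset ι).Nonempty := by
    by_contra h
    rw [Finset.not_nonempty_iff_eq_empty] at h
    rw [h] at hp1; simp at hp1
  set S := ∑ i, r i with hSdef
  have hS : 0 < S := Finset.sum_pos (fun i _ => hr i) hne
  have key : ∀ i, p i - r i / S ≤ p i * Real.log (p i * S / r i) := by
    intro i
    rcases eq_or_lt_of_le (hp i) with h0 | h0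
    · have : 0 ≤ r i / S := div_nonneg (hr i).le hS.le
      rw [← h0]; simp; linarith
    · have hpS : 0 < p i * S := mul_pos h0 hS
      have hx : 0 < r i / (p i * S) := div_pos (hr i) hpS
      have hlog := Real.log_le_sub_one_of_pos hx
      have hrev : Real.log (p i * S / r i) = -Real.log (r i / (p i * S)) := by
        rw [Real.log_div (ne_of_gt hpS) (ne_of_gt (hr i)),
            Real.log_div (ne_of_gt (hr i)) (ne_of_gt hpS)]
        ring
      rw [hrev]
      have h2 : p i * (r i / (p i * S)) = r i / S := by
        field_simp
      nlinarith [hlog, h0]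
  have hsum : 0 ≤ ∑ i, p i * Real.log (p i * S / r i) := by
    calc (0:ℝ) = ∑ i, (p i - r i / S) := by
          rw [Finset.sum_sub_distrib, hp1, ← Finset.sum_div, ← hSdef,
            div_self (ne_of_gt hS)]; ring
      _ ≤ _ := Finset.sum_le_sum (fun i _ => key i)
  have heq : ∀ i, p i * Real.log (p i * S / r i)
      = p i * Real.log (p i / r i) + p i * Real.log S := by
    intro i
    rcases eq_or_lt_of_le (hp i) with h0 | h0
    · rw [← h0]; ring
    · have : p i * S / r i = (p i / r i) * S := by ring
      rw [this, Real.log_mul (ne_of_gt (div_pos h0 (hr i))) (ne_of_gt hS)]; ring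
  rw [Finset.sum_congr rfl (fun i _ => heq i), Finset.sum_add_distrib,
    ← Finset.sum_mul, hp1, one_mul] at hsum
  linarith

lemma kl_nonneg' {ι : Type*} [Fintype ι] (p r : ι → ℝ)
    (hp : ∀ i, 0 ≤ p i) (hr : ∀ i, 0 < r i) (hp1 : ∑ i, p i = 1)
    (hr1 : ∑ i, r i = 1) :
    0 ≤ ∑ i, p i * Real.log (p i / r i) := by
  have := kl_ge_neg_log p r hp hr hp1
  rw [hr1] at this; simpa using this


/-- Theorem S1 of the paper, for a finite-state Markov chain
`x → z₁ → ⋯ → z_N → y`: the negative log-likelihood `-log L` is bounded from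
above by the sum of block-local losses
`∑ₖ [ ℓ_k^{(α)} + ℓ_k^{(ω)} + ∑_{l=k+1}^N ℓ_{k,l}^{(ρ)} ]`.
Here `α k` are the forward marginals (with `α 1 = π` and the forward
recursion through the transitions `P k : Z k → Z (k+1)`), `ω = p(y|z_N)`,
`L = p(y|x)`, `q k` are arbitrary variational pmfs, `Q l : Z l → Z (l+1)` are
arbitrary variational transition kernels (the paper's `Q_{l+1}`), and
`qp k l = q_{k→l}` are the propagated variational marginals (`qp k k = q k`,
`qp k (l+1) z' = ∑_z qp k l z * Q l z z'`). The index `j` below corresponds to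
the paper's `l - 1`, so `∑_{l=k+1}^N ℓ_{k,l}^{(ρ)} = ∑_{j=k}^{N-1} ℓ^{(ρ)}_{k,j+1}`. -/
theorem block_local_loss_bound (N : ℕ) (hN : 1 ≤ N)
    (Z : ℕ → Type*) [∀ k, Fintype (Z k)] [∀ k, Nonempty (Z k)]
    (π : Z 1 → ℝ) (hπ_sum : ∑ z, π z = 1) (hπ_pos : ∀ z, 0 < π z)
    (P : ∀ k : ℕ, Z k → Z (k + 1) → ℝ)
    (hP_sum : ∀ k, 1 ≤ k → k < N → ∀ z : Z k, ∑ z', P k z z' = 1)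
    (hP_pos : ∀ k, 1 ≤ k → k < N → ∀ (z : Z k) (z' : Z (k + 1)), 0 < P k z z')
    (ω : Z N → ℝ) (hω_pos : ∀ z, 0 < ω z) (hω_le : ∀ z, ω z ≤ 1)
    (α : ∀ k : ℕ, Z k → ℝ)
    (hα1 : ∀ z, α 1 z = π z)
    (hα : ∀ k, 1 ≤ k → k < N → ∀ z' : Z (k + 1), α (k + 1) z' = ∑ z, α k z * P k z z')
    (L : ℝ) (hL : L = ∑ z, α N z * ω z)
    (q : ∀ k : ℕ, Z k → ℝ)
    (hq_sum : ∀ k, 1 ≤ k → k ≤ N → ∑ z, q k z = 1)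
    (hq_nonneg : ∀ k z, 0 ≤ q k z)
    (Q : ∀ l : ℕ, Z l → Z (l + 1) → ℝ)
    (hQ_sum : ∀ l, 1 ≤ l → l < N → ∀ z : Z l, ∑ z', Q l z z' = 1)
    (hQ_nonneg : ∀ l (z : Z l) (z' : Z (l + 1)), 0 ≤ Q l z z')
    (qp : ℕ → ∀ l : ℕ, Z l → ℝ)
    (hqp_init : ∀ k, 1 ≤ k → k ≤ N → ∀ z, qp k k z = q k z)
    (hqp_rec : ∀ k l, 1 ≤ k → k ≤ l → l < N →
      ∀ z' : Z (l + 1), qp k (l + 1) z' = ∑ z, qp k l z * Q l z z') :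
    -Real.log L ≤ ∑ k ∈ Finset.Icc 1 N,
      ((∑ z, q k z * Real.log (q k z / α k z))
        + (-∑ z, qp k N z * Real.log (ω z))
        + ∑ j ∈ Finset.Icc k (N - 1),
            ((∑ z', qp k (j + 1) z' *
                Real.log (qp k (j + 1) z' / ∑ z, qp k j z * P j z z'))
              - ∑ z, ∑ z', qp k j z * qp k (j + 1) z' * Real.log (P j z z'))) := by
  -- facts about α
  have hα_facts : ∀ k, 1 ≤ k → k ≤ N → (∑ z, α k z) = 1 ∧ ∀ z, 0 < α k z := by
    intro k
    induction k with
    | zero => intro h; omega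
    | succ k ih =>
      intro _ hle
      by_cases hk : k = 0
      · subst hk
        refine ⟨?_, ?_⟩
        · rw [Finset.sum_congr rfl (fun z _ => hα1 z)]; exact hπ_sum
        · intro z; rw [hα1 z]; exact hπ_pos z
      · have hk1 : 1 ≤ k := by omega
        have hkN : k < N := by omega
        obtain ⟨hs, hpos⟩ := ih hk1 (le_of_lt hkN)
        refine ⟨?_, ?_⟩
        · rw [Finset.sum_congr rfl (fun z' _ => hα k hk1 hkN z'), Finset.sum_comm]
          rw [Finset.sum_congr rfl
            (fun z _ => by rw [← Finset.mul_sum, hP_sum k hk1 hkN z, mul_one])]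
          exact hs
        · intro z'
          rw [hα k hk1 hkN z']
          exact Finset.sum_pos
            (fun z _ => mul_pos (hpos z) (hP_pos k hk1 hkN z z'))
            Finset.univ_nonempty
  -- facts about qp
  have hqp_facts : ∀ k l, 1 ≤ k → k ≤ l → l ≤ N →
      (∑ z, qp k l z = 1) ∧ ∀ z, 0 ≤ qp k l z := by
    intro k l hk1
    induction l with
    | zero => intro h; omega
    | succ l ih =>
      intro hkl hlN
      by_cases hkeq : k = l + 1
      · subst hkeq
        refine ⟨?_, ?_⟩
        · rw [Finset.sum_congr rfl (fun z _ => hqp_init _ hk1 hlN z)]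
          exact hq_sum _ hk1 hlN
        · intro z; rw [hqp_init _ hk1 hlN z]; exact hq_nonneg _ z
      · have hkl' : k ≤ l := by omega
        have hlN' : l < N := by omega
        obtain ⟨hs, hnn⟩ := ih hkl' (le_of_lt hlN')
        refine ⟨?_, ?_⟩
        · rw [Finset.sum_congr rfl (fun z' _ => hqp_rec k l hk1 hkl' hlN' z'),
            Finset.sum_comm]
          rw [Finset.sum_congr rfl
            (fun z _ => by rw [← Finset.mul_sum, hQ_sum l (by omega) hlN' z, mul_one])]
          exact hs
        · intro z'
          rw [hqp_rec k l hk1 hkl' hlN' z']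
          exact Finset.sum_nonneg (fun z _ => mul_nonneg (hnn z) (hQ_nonneg l z z'))
  -- the summand
  set f : ℕ → ℝ := fun k =>
      ((∑ z, q k z * Real.log (q k z / α k z))
        + (-∑ z, qp k N z * Real.log (ω z))
        + ∑ j ∈ Finset.Icc k (N - 1),
            ((∑ z', qp k (j + 1) z' *
                Real.log (qp k (j + 1) z' / ∑ z, qp k j z * P j z z'))
              - ∑ z, ∑ z', qp k j z * qp k (j + 1) z' * Real.log (P j z z'))) with hf
  -- each summand is nonnegative
  have hf_nonneg : ∀ k ∈ Finset.Icc 1 N, 0 ≤ f k := by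
    intro k hk
    rw [Finset.mem_Icc] at hk
    obtain ⟨hk1, hkN⟩ := hk
    obtain ⟨hαs, hαpos⟩ := hα_facts k hk1 hkN
    have h1 : 0 ≤ ∑ z, q k z * Real.log (q k z / α k z) :=
      kl_nonneg' _ _ (hq_nonneg k) hαpos (hq_sum k hk1 hkN) hαs
    have h2 : 0 ≤ -∑ z, qp k N z * Real.log (ω z) := by
      rw [neg_nonneg]
      exact Finset.sum_nonpos (fun z _ =>
        mul_nonpos_of_nonneg_of_nonpos ((hqp_facts k N hk1 hkN le_rfl).2 z)
          (Real.log_nonpos (hω_pos z).le (hω_le z)))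
    have h3 : 0 ≤ ∑ j ∈ Finset.Icc k (N - 1),
        ((∑ z', qp k (j + 1) z' *
            Real.log (qp k (j + 1) z' / ∑ z, qp k j z * P j z z'))
          - ∑ z, ∑ z', qp k j z * qp k (j + 1) z' * Real.log (P j z z')) := by
      refine Finset.sum_nonneg (fun j hj => ?_)
      rw [Finset.mem_Icc] at hj
      have hj1 : 1 ≤ j := le_trans hk1 hj.1
      have hjN : j < N := by omega
      obtain ⟨hjs, hjnn⟩ := hqp_facts k j hk1 hj.1 (le_of_lt hjN)
      obtain ⟨hjs', hjnn'⟩ := hqp_facts k (j + 1) hk1 (by omega) hjN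
      -- the mixture marginal is a positive pmf
      have hz0 : ∃ z, 0 < qp k j z := by
        by_contra h
        push_neg at h
        have : ∑ z, qp k j z = 0 :=
          Finset.sum_eq_zero (fun z _ => le_antisymm (h z) (hjnn z))
        rw [this] at hjs; norm_num at hjs
      obtain ⟨z0, hz0⟩ := hz0
      have hmpos : ∀ z', 0 < ∑ z, qp k j z * P j z z' := by
        intro z'
        refine Finset.sum_pos' (fun z _ => mul_nonneg (hjnn z) (hP_pos j hj1 hjN z z').le)
          ⟨z0, Finset.mem_univ z0, mul_pos hz0 (hP_pos j hj1 hjN z0 z')⟩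
      have hmsum : ∑ z', ∑ z, qp k j z * P j z z' = 1 := by
        rw [Finset.sum_comm]
        rw [Finset.sum_congr rfl
          (fun z _ => by rw [← Finset.mul_sum, hP_sum j hj1 hjN z, mul_one])]
        exact hjs
      have hklpart : 0 ≤ ∑ z', qp k (j + 1) z' *
          Real.log (qp k (j + 1) z' / ∑ z, qp k j z * P j z z') :=
        kl_nonneg' _ _ hjnn' hmpos hjs' hmsum
      have hcross : ∑ z, ∑ z', qp k j z * qp k (j + 1) z' * Real.log (P j z z') ≤ 0 := by
        refine Finset.sum_nonpos (fun z _ => Finset.sum_nonpos (fun z' _ => ?_))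
        refine mul_nonpos_of_nonneg_of_nonpos (mul_nonneg (hjnn z) (hjnn' z')) ?_
        refine Real.log_nonpos (hP_pos j hj1 hjN z z').le ?_
        calc P j z z' ≤ ∑ z'', P j z z'' :=
              Finset.single_le_sum (fun z'' _ => (hP_pos j hj1 hjN z z'').le)
                (Finset.mem_univ z')
          _ = 1 := hP_sum j hj1 hjN z
      linarith
    simp only [hf]
    linarith
  -- the k = N summand bounds -log L
  have hfN : -Real.log L ≤ f N := by
    obtain ⟨hαs, hαpos⟩ := hα_facts N hN le_rfl
    have hempty : Finset.Icc N (N - 1) = ∅ := Finset.Icc_eq_empty (by omega)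
    have hqeq : ∀ z, qp N N z = q N z := hqp_init N hN le_rfl
    have hterm : ∀ z : Z N, q N z * Real.log (q N z / (α N z * ω z))
        = q N z * Real.log (q N z / α N z) - q N z * Real.log (ω z) := by
      intro z
      rcases eq_or_lt_of_le (hq_nonneg N z) with h0 | h0
      · rw [← h0]; ring
      · rw [div_mul_eq_div_div,
          Real.log_div (ne_of_gt (div_pos h0 (hαpos z))) (ne_of_gt (hω_pos z))]
        ring
    have hkl : -Real.log (∑ z, α N z * ω z)
        ≤ ∑ z, q N z * Real.log (q N z / (α N z * ω z)) :=
      kl_ge_neg_log (q N) (fun z => α N z * ω z) (hq_nonneg N)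
        (fun z => mul_pos (hαpos z) (hω_pos z)) (hq_sum N hN le_rfl)
    have hq2 : ∑ z, qp N N z * Real.log (ω z) = ∑ z, q N z * Real.log (ω z) :=
      Finset.sum_congr rfl (fun z _ => by rw [hqeq z])
    simp only [hf, hempty, Finset.sum_empty, add_zero]
    rw [hq2, hL]
    calc -Real.log (∑ z, α N z * ω z)
        ≤ ∑ z, q N z * Real.log (q N z / (α N z * ω z)) := hkl
      _ = ∑ z, (q N z * Real.log (q N z / α N z) - q N z * Real.log (ω z)) :=
          Finset.sum_congr rfl (fun z _ => hterm z)
      _ = (∑ z, q N z * Real.log (q N z / α N z))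
          + (-∑ z, q N z * Real.log (ω z)) := by
          rw [Finset.sum_sub_distrib]; ring
  calc -Real.log L ≤ f N := hfN
    _ ≤ ∑ k ∈ Finset.Icc 1 N, f k :=
        Finset.single_le_sum hf_nonneg (by simp [Finset.mem_Icc, hN])
end
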